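/- Let n ≥ 2 and let a, b, c, d : {0, …, n−1} → ℂ be nonzero scalars such that aᵢ ≠ bᵢ and cᵢ ≠ dᵢ for all i, aᵢb_j ≠ a_jbᵢ and cᵢd_j ≠ c_jdᵢ for all i ≠ j, and a₁ ≠ d₁. Set A = diag(a₀, …, a_{n−1}, −1), B = diag(b₀, …, b_{n−1}, −1), C = diag(c₀, …, c_{n−1}, −1), D = diag(d₀, …, d_{n−1}, −1), and suppose there exist t₁, t₂ ∈ ℂ and nonzero μ₁, μ₂ ∈ ℂ with C⁻¹ = μ₁·(A⁻¹ + t₁·B⁻¹) and D⁻¹ = μ₂·(A⁻¹ + t₂·B⁻¹). Assume moreover the open conditions: a₁(c₁d₀ − c₀d₁) + c₁d₁(c₀ − d₀) ≠ 0, and for every i ∈ {2, …, n}: c₁(a_{i−1}b₀ − a₀b_{i−1})·(d₁(d₀ − c₀) − a₁d₀) + a₁c₀·(b₀c₁(a_{i−1} − b_{i−1}) + b_{i−1}d₁(b₀ − a₀)) ≠ 0. Let N₁ be the 2×(n+2) matrix over ℂ[x₀, …, xₙ] with first row (2a₀x₀, …, 2a_{n−1}x_{n−1}, −2xₙ, a₀x₀²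 + … + a_{n−1}x_{n−1}² − xₙ²) and second row (2b₀x₀, …, 2b_{n−1}x_{n−1}, −2xₙ, 0), and let N₂ be the analogous matrix with c, d in place of a, b. Then there exist an invertible 2×2 complex matrix M′ and an (n+2)×(n+2) matrix M″ over ℂ[x₀, …, xₙ] whose top-left (n+1)×(n+1) block is an invertible complex matrix E, whose last-column entries above the bottom row are homogeneous linear forms, whose bottom row is zero except for a nonzero scalar θ ∈ ℂ in the last position, such that M′·N₁ = N₂·M″; that is, the logarithmic bundles of the two pairs of quadrics are isomorphic. -/

import Mathlib

open Matrix

/-- The diagonal matrix `diag(a₀, …, a_{n−1}, −1)`. -/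
def quadDiag (n : ℕ) (a : Fin n → ℂ) : Matrix (Fin (n+1)) (Fin (n+1)) ℂ :=
  Matrix.diagonal fun i => if h : (i : ℕ) < n then a ⟨(i : ℕ), h⟩ else -1

/-- Ancona's `2×(n+2)` matrix of a pair of diagonal quadrics: first row
`(2a₀x₀, …, 2a_{n−1}x_{n−1}, −2xₙ, a₀x₀² + … + a_{n−1}x_{n−1}² − xₙ²)`, second row
`(2b₀x₀, …, 2b_{n−1}x_{n−1}, −2xₙ, 0)`. -/
noncomputable def quadPairN (n : ℕ) (a b : Fin n → ℂ) :
    Matrix (Fin 2) (Fin (n+2)) (MvPolynomial (Fin (n+1)) ℂ) :=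
  Matrix.of fun r j =>
    if h : (j : ℕ) < n then
      MvPolynomial.C (2 * (if r = 0 then a ⟨(j : ℕ), h⟩ else b ⟨(j : ℕ), h⟩)) *
        MvPolynomial.X (⟨(j : ℕ), by omega⟩ : Fin (n+1))
    else if (j : ℕ) = n then
      MvPolynomial.C (-2) * MvPolynomial.X (⟨n, by omega⟩ : Fin (n+1))
    else if r = 0 then
      (∑ k : Fin n, MvPolynomial.C (a k) * MvPolynomial.X (Fin.castSucc k) ^ 2) -
        MvPolynomial.X (Fin.last n) ^ 2
    else 0

/-- The `(n+2)×(n+2)` bundle-map matrix `M″`: top-left `(n+1)×(n+1)` block a constant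
matrix `E`, last column above the bottom given by linear forms `fv`, bottom row zero except
for the scalar `θ` in the last position. -/
noncomputable def quadPairM'' (n : ℕ) (E : Matrix (Fin (n+1)) (Fin (n+1)) ℂ)
    (fv : Fin (n+1) → MvPolynomial (Fin (n+1)) ℂ) (θ : ℂ) :
    Matrix (Fin (n+2)) (Fin (n+2)) (MvPolynomial (Fin (n+1)) ℂ) :=
  Matrix.of fun i j =>
    if hi : (i : ℕ) < n + 1 then
      if hj : (j : ℕ) < n + 1 then MvPolynomial.C (E ⟨(i : ℕ), hi⟩ ⟨(j : ℕ), hj⟩)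
      else fv ⟨(i : ℕ), hi⟩
    else if (j : ℕ) < n + 1 then 0 else MvPolynomial.C θ

namespace QuadAux

def qext (n : ℕ) (u : Fin n → ℂ) : Fin (n+1) → ℂ :=
  fun i => if h : (i : ℕ) < n then u ⟨(i : ℕ), h⟩ else -1

noncomputable def NN (n : ℕ) (A B : Fin (n+1) → ℂ) :
    Matrix (Fin 2) (Fin (n+2)) (MvPolynomial (Fin (n+1)) ℂ) :=
  Matrix.of fun r j =>
    if hj : (j : ℕ) < n + 1 then
      MvPolynomial.C (2 * (if r = 0 then A ⟨(j : ℕ), hj⟩ else B ⟨(j : ℕ), hj⟩)) *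
        MvPolynomial.X (⟨(j : ℕ), hj⟩ : Fin (n+1))
    else if r = 0 then ∑ k, MvPolynomial.C (A k) * MvPolynomial.X k ^ 2 else 0

theorem quadPairN_eq_NN (n : ℕ) (a b : Fin n → ℂ) :
    quadPairN n a b = NN n (qext n a) (qext n b) := by
  refine Matrix.ext fun r j => ?_
  unfold quadPairN NN qext
  rw [Matrix.of_apply, Matrix.of_apply]
  by_cases h : (j : ℕ) < n
  · rw [dif_pos h, dif_pos (by omega : (j:ℕ) < n + 1)]
    simp only [dif_pos h]
  · rw [dif_neg h]
    by_cases h' : (j : ℕ) = n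
    · rw [if_pos h', dif_pos (by omega : (j:ℕ) < n + 1)]
      simp only [dif_neg h, ite_self]
      norm_num
      congr 1
      exact h'.symm
    · have hj2 : ¬ ((j:ℕ) < n + 1) := by omega
      rw [if_neg h', dif_neg hj2]
      by_cases hr : r = 0
      · rw [if_pos hr, if_pos hr]
        rw [Fin.sum_univ_castSucc]
        have h1 : ∀ k : Fin n, (if h : ((Fin.castSucc k : Fin (n+1)) : ℕ) < n then
            a ⟨((Fin.castSucc k : Fin (n+1)) : ℕ), h⟩ else -1) = a k := by
          intro k
          rw [dif_pos (by simpa using k.isLt)]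
          exact congrArg a (Fin.ext (by simp))
        simp only [h1]
        have h2 : (if h : ((Fin.last n : Fin (n+1)) : ℕ) < n then
            a ⟨((Fin.last n : Fin (n+1)) : ℕ), h⟩ else (-1:ℂ)) = -1 := by
          rw [dif_neg (by simp)]
        rw [h2]
        simp only [_root_.map_neg, _root_.map_one]
        ring
      · rw [if_neg hr, if_neg hr]


theorem quadDiag_eq (n : ℕ) (u : Fin n → ℂ) :
    quadDiag n u = Matrix.diagonal (qext n u) := rfl

theorem qext_ne_zero {n : ℕ} {u : Fin n → ℂ} (hu : ∀ i, u i ≠ 0) (i : Fin (n+1)) :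
    qext n u i ≠ 0 := by
  unfold qext
  split
  · exact hu _
  · norm_num

theorem inv_diag {m : ℕ} (v : Fin m → ℂ) (hv : ∀ i, v i ≠ 0) :
    (Matrix.diagonal v)⁻¹ = Matrix.diagonal fun i => (v i)⁻¹ := by
  apply Matrix.inv_eq_right_inv
  rw [Matrix.diagonal_mul_diagonal]
  rw [show (fun i => v i * (v i)⁻¹) = fun _ => (1:ℂ) from funext fun i => mul_inv_cancel₀ (hv i)]
  exact Matrix.diagonal_one


set_option maxHeartbeats 2000000 in
theorem key (n : ℕ) (Af Bf Cf Df : Fin (n+1) → ℂ)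
    (hAf : ∀ i, Af i ≠ 0) (hBf : ∀ i, Bf i ≠ 0) (hCf : ∀ i, Cf i ≠ 0) (hDf : ∀ i, Df i ≠ 0)
    (t₁ t₂ μ₁ μ₂ : ℂ) (hμ₁ : μ₁ ≠ 0) (hμ₂ : μ₂ ≠ 0) (ht : t₁ ≠ t₂)
    (hc1 : ∀ i, (Cf i)⁻¹ = μ₁ * ((Af i)⁻¹ + t₁ * (Bf i)⁻¹))
    (hd1 : ∀ i, (Df i)⁻¹ = μ₂ * ((Af i)⁻¹ + t₂ * (Bf i)⁻¹)) :
    ∃ M' : Matrix (Fin 2) (Fin 2) ℂ, IsUnit M'.det ∧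
      ∃ E : Matrix (Fin (n+1)) (Fin (n+1)) ℂ, IsUnit E.det ∧
      ∃ fv : Fin (n+1) → MvPolynomial (Fin (n+1)) ℂ, (∀ i, (fv i).IsHomogeneous 1) ∧
      ∃ θ : ℂ, θ ≠ 0 ∧
        M'.map MvPolynomial.C * NN n Af Bf = NN n Cf Df * quadPairM'' n E fv θ := by
  classical
  have hSc : ∀ i, (Af i)⁻¹ + t₁ * (Bf i)⁻¹ ≠ 0 := by
    intro i h
    have h2 := hc1 i
    rw [h, mul_zero] at h2
    exact inv_ne_zero (hCf i) h2
  have hSd : ∀ i, (Af i)⁻¹ + t₂ * (Bf i)⁻¹ ≠ 0 := by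
    intro i h
    have h2 := hd1 i
    rw [h, mul_zero] at h2
    exact inv_ne_zero (hDf i) h2
  have hc2 : ∀ i, Cf i = (μ₁ * ((Af i)⁻¹ + t₁ * (Bf i)⁻¹))⁻¹ := by
    intro i
    rw [← hc1 i, inv_inv]
  have hd2 : ∀ i, Df i = (μ₂ * ((Af i)⁻¹ + t₂ * (Bf i)⁻¹))⁻¹ := by
    intro i
    rw [← hd1 i, inv_inv]
  have hfrac1 : ∀ i, (Af i)⁻¹ + t₁ * (Bf i)⁻¹ = (Bf i + t₁ * Af i) / (Af i * Bf i) := by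
    intro i
    field_simp [hAf i, hBf i]
  have hfrac2 : ∀ i, (Af i)⁻¹ + t₂ * (Bf i)⁻¹ = (Bf i + t₂ * Af i) / (Af i * Bf i) := by
    intro i
    field_simp [hAf i, hBf i]
  have hX1 : ∀ i, Bf i + t₁ * Af i ≠ 0 := by
    intro i h
    have h2 := hSc i
    rw [hfrac1 i, h, zero_div] at h2
    exact h2 rfl
  have hX2 : ∀ i, Bf i + t₂ * Af i ≠ 0 := by
    intro i h
    have h2 := hSd i
    rw [hfrac2 i, h, zero_div] at h2
    exact h2 rfl
  have hc3 : ∀ i, Cf i = Af i * Bf i / (μ₁ * (Bf i + t₁ * Af i)) := by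
    intro i
    rw [hc2 i, hfrac1 i, mul_div_assoc', inv_div]
  have hd3 : ∀ i, Df i = Af i * Bf i / (μ₂ * (Bf i + t₂ * Af i)) := by
    intro i
    rw [hd2 i, hfrac2 i, mul_div_assoc', inv_div]
  have hBA2 : ∀ i, t₂ * Af i + Bf i ≠ 0 := by
    intro i h
    exact hX2 i (by rw [add_comm] at h; exact h)
  have htt : t₂ - t₁ ≠ 0 := sub_ne_zero.2 (Ne.symm ht)
  set r₀ : ℂ := μ₁ * t₁ / μ₂ with hr₀
  set s₀ : ℂ := μ₁ / μ₂ with hs₀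
  set θ : ℂ := μ₁ * (t₂ - t₁) with hθ
  set e : Fin (n+1) → ℂ := fun i => μ₁ * (Bf i + t₁ * Af i) * (t₂ * Af i + Bf i) / (Af i * Bf i) with he
  set lam : Fin (n+1) → ℂ := fun i => μ₁ * t₁ * (Bf i + t₂ * Af i) / (2 * Bf i) with hlam
  -- scalar identities
  have hY1 : ∀ i, Af i * t₁ + Bf i ≠ 0 := fun i h => hX1 i (by linear_combination h)
  have hY2 : ∀ i, t₁ * Af i + Bf i ≠ 0 := fun i h => hX1 i (by linear_combination h)
  have hY3 : ∀ i, Af i * t₂ + Bf i ≠ 0 := fun i h => hX2 i (by linear_combination h)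
  have hY4 : ∀ i, Bf i + Af i * t₂ ≠ 0 := fun i h => hX2 i (by linear_combination h)
  have hY5 : ∀ i, Bf i + Af i * t₁ ≠ 0 := fun i h => hX1 i (by linear_combination h)
  have sc1 : ∀ i, t₂ * (2 * Af i) + 1 * (2 * Bf i) = 2 * Cf i * e i := by
    intro i
    rw [he]
    simp only
    rw [hc3 i]
    field_simp [hAf i, hBf i, hμ₁, hX1 i, hY1 i, hY2 i, hY5 i]
  have sc2 : ∀ i, r₀ * (2 * Af i) + s₀ * (2 * Bf i) = 2 * Df i * e i := by
    intro i
    rw [he, hr₀, hs₀]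
    simp only
    rw [hd3 i]
    field_simp [hAf i, hBf i, hμ₁, hμ₂, hX1 i, hX2 i, hY1 i, hY2 i, hY3 i, hY4 i, hY5 i, hBA2 i]
    ring
  have sc3 : ∀ i, t₂ * Af i = 2 * Cf i * lam i + θ * Cf i := by
    intro i
    rw [hlam, hθ]
    simp only
    rw [hc3 i]
    field_simp [hAf i, hBf i, hμ₁, hμ₂, hX1 i, hX2 i, hY1 i, hY2 i, hY3 i, hY4 i, hY5 i, hBA2 i]
    ring
  have sc4 : ∀ i, r₀ * Af i = 2 * Df i * lam i := by
    intro i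
    rw [hlam, hr₀]
    simp only
    rw [hd3 i]
    field_simp [hAf i, hBf i, hμ₁, hμ₂, hX1 i, hX2 i, hY1 i, hY2 i, hY3 i, hY4 i, hY5 i, hBA2 i]
  refine ⟨!![t₂, 1; r₀, s₀], ?_, Matrix.diagonal e, ?_, fun i => MvPolynomial.C (lam i) * MvPolynomial.X i, ?_, θ, mul_ne_zero hμ₁ htt, ?_⟩
  · rw [Matrix.det_fin_two_of]
    have : t₂ * s₀ - 1 * r₀ = μ₁ * (t₂ - t₁) / μ₂ := by
      rw [hs₀, hr₀]
      field_simp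
    rw [this]
    exact isUnit_iff_ne_zero.2 (div_ne_zero (mul_ne_zero hμ₁ htt) hμ₂)
  · rw [Matrix.det_diagonal]
    refine isUnit_iff_ne_zero.2 (Finset.prod_ne_zero_iff.2 fun i _ => ?_)
    rw [he]
    exact div_ne_zero (mul_ne_zero (mul_ne_zero hμ₁ (hX1 i)) (hBA2 i))
      (mul_ne_zero (hAf i) (hBf i))
  · intro i
    simpa using (MvPolynomial.isHomogeneous_C _ (lam i)).mul (MvPolynomial.isHomogeneous_X _ i)
  · -- the matrix identity
    refine Matrix.ext fun rr j => ?_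
    erw [Matrix.mul_apply, Matrix.mul_apply, Fin.sum_univ_two]
    have hNNj : ∀ (P Q : Fin (n+1) → ℂ) (rr : Fin 2) (hj : (j : ℕ) < n + 1),
        NN n P Q rr j = MvPolynomial.C (2 * (if rr = 0 then P ⟨(j:ℕ), hj⟩ else Q ⟨(j:ℕ), hj⟩)) *
          MvPolynomial.X (⟨(j:ℕ), hj⟩ : Fin (n+1)) := by
      intro P Q rr hj
      unfold NN
      rw [Matrix.of_apply, dif_pos hj]
    by_cases hj : (j : ℕ) < n + 1
    · -- left block
      rw [Finset.sum_eq_single j ?h1 (by simp)]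
      · have hM : quadPairM'' n (Matrix.diagonal e) (fun i => MvPolynomial.C (lam i) * MvPolynomial.X i) θ j j
            = MvPolynomial.C (e ⟨(j:ℕ), hj⟩) := by
          unfold quadPairM''
          rw [Matrix.of_apply, dif_pos hj, dif_pos hj, Matrix.diagonal_apply_eq]
        rw [hM, hNNj Af Bf 0 hj, hNNj Af Bf 1 hj, hNNj Cf Df rr hj]
        fin_cases rr
        · have hCc : ∀ x y : ℂ, x = y →
              (MvPolynomial.C x : MvPolynomial (Fin (n+1)) ℂ) = MvPolynomial.C y := by
            intro x y h
            rw [h]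
          have h := hCc _ _ (sc1 ⟨(j:ℕ), hj⟩)
          simp only [_root_.map_add, _root_.map_mul, _root_.map_one, _root_.map_ofNat] at h
          simp only [Fin.mk_zero, Fin.mk_one, Fin.isValue, Matrix.map_apply, Matrix.cons_val',
            Matrix.cons_val_zero, Matrix.cons_val_one, Matrix.head_cons, Matrix.empty_val',
            Matrix.cons_val_fin_one, Matrix.head_fin_const, reduceIte, if_true, Matrix.of_apply,
            show ((1:Fin 2) = 0) = False by simp, if_false]
          try simp only [_root_.map_mul, _root_.map_ofNat, _root_.map_one]
          linear_combination (MvPolynomial.X (⟨(j:ℕ), hj⟩ : Fin (n+1))) * h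
        · have hCc : ∀ x y : ℂ, x = y →
              (MvPolynomial.C x : MvPolynomial (Fin (n+1)) ℂ) = MvPolynomial.C y := by
            intro x y h
            rw [h]
          have h := hCc _ _ (sc2 ⟨(j:ℕ), hj⟩)
          simp only [_root_.map_add, _root_.map_mul, _root_.map_one, _root_.map_ofNat] at h
          simp only [Fin.mk_zero, Fin.mk_one, Fin.isValue, Matrix.map_apply, Matrix.cons_val',
            Matrix.cons_val_zero, Matrix.cons_val_one, Matrix.head_cons, Matrix.empty_val',
            Matrix.cons_val_fin_one, Matrix.head_fin_const, reduceIte, if_true, Matrix.of_apply,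
            show ((1:Fin 2) = 0) = False by simp, if_false]
          try simp only [_root_.map_mul, _root_.map_ofNat, _root_.map_one]
          linear_combination (MvPolynomial.X (⟨(j:ℕ), hj⟩ : Fin (n+1))) * h
      case h1 =>
        intro k _ hk
        have hkj : (k : ℕ) ≠ (j : ℕ) := fun h => hk (Fin.ext h)
        unfold quadPairM''
        rw [Matrix.of_apply]
        by_cases hk2 : (k : ℕ) < n + 1
        · rw [dif_pos hk2, dif_pos hj]
          rw [Matrix.diagonal_apply_ne _ (fun h => hkj (by simpa using congrArg Fin.val h))]
          rw [map_zero, mul_zero]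
        · rw [dif_neg hk2, if_pos hj, mul_zero]
    · -- last column
      have hCc : ∀ x y : ℂ, x = y →
          (MvPolynomial.C x : MvPolynomial (Fin (n+1)) ℂ) = MvPolynomial.C y := by
        intro x y h
        rw [h]
      have hjl : j = Fin.last (n+1) := by
        apply Fin.ext
        have := j.isLt
        simp only [Fin.val_last]
        omega
      subst hjl
      rw [Fin.sum_univ_castSucc]
      have hNNc : ∀ (P Q : Fin (n+1) → ℂ) (rr : Fin 2) (k : Fin (n+1)),
          NN n P Q rr (Fin.castSucc k) =
            MvPolynomial.C (2 * (if rr = 0 then P k else Q k)) * MvPolynomial.X k := by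
        intro P Q rr k
        unfold NN
        rw [Matrix.of_apply, dif_pos (show ((Fin.castSucc k : Fin (n+2)) : ℕ) < n + 1 from k.isLt)]
        simp [Fin.eta]
      have hNNlast : ∀ (P Q : Fin (n+1) → ℂ) (rr : Fin 2),
          NN n P Q rr (Fin.last (n+1)) =
            if rr = 0 then ∑ k, MvPolynomial.C (P k) * MvPolynomial.X k ^ 2 else 0 := by
        intro P Q rr
        unfold NN
        rw [Matrix.of_apply, dif_neg (by simp)]
      have hMc : ∀ k : Fin (n+1),
          quadPairM'' n (Matrix.diagonal e) (fun i => MvPolynomial.C (lam i) * MvPolynomial.X i) θ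
            (Fin.castSucc k) (Fin.last (n+1)) = MvPolynomial.C (lam k) * MvPolynomial.X k := by
        intro k
        unfold quadPairM''
        rw [Matrix.of_apply, dif_pos (show ((Fin.castSucc k : Fin (n+2)) : ℕ) < n + 1 from k.isLt),
          dif_neg hj]
        simp [Fin.eta]
      have hMlast : quadPairM'' n (Matrix.diagonal e) (fun i => MvPolynomial.C (lam i) * MvPolynomial.X i) θ
          (Fin.last (n+1)) (Fin.last (n+1)) = MvPolynomial.C θ := by
        unfold quadPairM''
        rw [Matrix.of_apply, dif_neg (by simp), if_neg hj]
      simp only [hNNc, hMc, hNNlast, hMlast]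
      have m00 : ((!![t₂,1;r₀,s₀]).map (⇑(MvPolynomial.C (σ := Fin (n+1)) (R := ℂ)))) 0 0 = MvPolynomial.C t₂ := by simp
      have m01 : ((!![t₂,1;r₀,s₀]).map (⇑(MvPolynomial.C (σ := Fin (n+1)) (R := ℂ)))) 0 1 = MvPolynomial.C 1 := by simp
      have m10 : ((!![t₂,1;r₀,s₀]).map (⇑(MvPolynomial.C (σ := Fin (n+1)) (R := ℂ)))) 1 0 = MvPolynomial.C r₀ := by simp
      have m11 : ((!![t₂,1;r₀,s₀]).map (⇑(MvPolynomial.C (σ := Fin (n+1)) (R := ℂ)))) 1 1 = MvPolynomial.C s₀ := by simp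
      fin_cases rr
      · beta_reduce
        simp only [Fin.mk_zero, Fin.isValue, if_true,
          show ((1:Fin 2) = 0) = False by simp, if_false,
          show ((0:Fin 2) = 0) = True by simp]
        rw [m00, m01]
        rw [mul_zero, add_zero, Finset.mul_sum, Finset.sum_mul, ← Finset.sum_add_distrib]
        refine Finset.sum_congr rfl fun k _ => ?_
        have h := hCc _ _ (sc3 k)
        simp only [_root_.map_add, _root_.map_mul, _root_.map_one, _root_.map_ofNat] at h
        try simp only [_root_.map_mul, _root_.map_ofNat, _root_.map_one]
        linear_combination ((MvPolynomial.X k : MvPolynomial (Fin (n+1)) ℂ) ^ 2) * h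
      · beta_reduce
        simp only [Fin.mk_one, Fin.isValue, if_true,
          show ((1:Fin 2) = 0) = False by simp, if_false,
          show ((0:Fin 2) = 0) = True by simp]
        rw [m10, m11]
        rw [mul_zero, add_zero, zero_mul, add_zero, Finset.mul_sum]
        refine Finset.sum_congr rfl fun k _ => ?_
        have h := hCc _ _ (sc4 k)
        simp only [_root_.map_add, _root_.map_mul, _root_.map_one, _root_.map_ofNat] at h
        try simp only [_root_.map_mul, _root_.map_ofNat, _root_.map_one]
        linear_combination ((MvPolynomial.X k : MvPolynomial (Fin (n+1)) ℂ) ^ 2) * h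


end QuadAux

/-- If the dual quadrics of a normal-crossing pair `(C,D)` of diagonal
quadrics lie in the pencil generated by the dual quadrics of `(A,B)` (same tangent
hyperplanes) and the stated open genericity conditions hold, then the logarithmic bundles
of the two pairs are isomorphic: there is a commutative diagram `M′·N₁ = N₂·M″` with `M′`
an invertible constant `2×2` matrix and `M″` of the displayed invertible shape. -/
theorem same_tangent_hyperplanes_implies_log_bundle_iso
    (n : ℕ) (hn : 2 ≤ n) (a b c d : Fin n → ℂ)
    (ha : ∀ i, a i ≠ 0) (hb : ∀ i, b i ≠ 0) (hc : ∀ i, c i ≠ 0) (hd : ∀ i, d i ≠ 0)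
    (hab : ∀ i, a i ≠ b i) (hcd : ∀ i, c i ≠ d i)
    (hab2 : ∀ i j, i ≠ j → a i * b j ≠ a j * b i)
    (hcd2 : ∀ i j, i ≠ j → c i * d j ≠ c j * d i)
    (had : a ⟨1, by omega⟩ ≠ d ⟨1, by omega⟩)
    (hdual : ∃ t₁ t₂ μ₁ μ₂ : ℂ, μ₁ ≠ 0 ∧ μ₂ ≠ 0 ∧
      (quadDiag n c)⁻¹ = μ₁ • ((quadDiag n a)⁻¹ + t₁ • (quadDiag n b)⁻¹) ∧
      (quadDiag n d)⁻¹ = μ₂ • ((quadDiag n a)⁻¹ + t₂ • (quadDiag n b)⁻¹))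
    (hopen1 : a ⟨1, by omega⟩ *
        (c ⟨1, by omega⟩ * d ⟨0, by omega⟩ - c ⟨0, by omega⟩ * d ⟨1, by omega⟩) +
        c ⟨1, by omega⟩ * d ⟨1, by omega⟩ * (c ⟨0, by omega⟩ - d ⟨0, by omega⟩) ≠ 0)
    (hopen2 : ∀ (i : ℕ) (h2i : 2 ≤ i) (hin : i ≤ n),
      c ⟨1, by omega⟩ *
          (a ⟨i - 1, by omega⟩ * b ⟨0, by omega⟩ - a ⟨0, by omega⟩ * b ⟨i - 1, by omega⟩) *
          (d ⟨1, by omega⟩ * (d ⟨0, by omega⟩ - c ⟨0, by omega⟩) -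
            a ⟨1, by omega⟩ * d ⟨0, by omega⟩) +
        a ⟨1, by omega⟩ * c ⟨0, by omega⟩ *
          (b ⟨0, by omega⟩ * c ⟨1, by omega⟩ * (a ⟨i - 1, by omega⟩ - b ⟨i - 1, by omega⟩) +
            b ⟨i - 1, by omega⟩ * d ⟨1, by omega⟩ * (b ⟨0, by omega⟩ - a ⟨0, by omega⟩)) ≠ 0) :
    ∃ M' : Matrix (Fin 2) (Fin 2) ℂ, IsUnit M'.det ∧
      ∃ E : Matrix (Fin (n+1)) (Fin (n+1)) ℂ, IsUnit E.det ∧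
      ∃ fv : Fin (n+1) → MvPolynomial (Fin (n+1)) ℂ, (∀ i, (fv i).IsHomogeneous 1) ∧
      ∃ θ : ℂ, θ ≠ 0 ∧
        M'.map MvPolynomial.C * quadPairN n a b = quadPairN n c d * quadPairM'' n E fv θ := by
  classical
  obtain ⟨t₁, t₂, μ₁, μ₂, hμ₁, hμ₂, hCeq, hDeq⟩ := hdual
  have hC1 : ∀ i, (QuadAux.qext n c i)⁻¹ =
      μ₁ * ((QuadAux.qext n a i)⁻¹ + t₁ * (QuadAux.qext n b i)⁻¹) := by
    intro i
    rw [QuadAux.quadDiag_eq, QuadAux.quadDiag_eq, QuadAux.quadDiag_eq,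
      QuadAux.inv_diag _ (QuadAux.qext_ne_zero hc), QuadAux.inv_diag _ (QuadAux.qext_ne_zero ha),
      QuadAux.inv_diag _ (QuadAux.qext_ne_zero hb)] at hCeq
    have := congrFun (congrFun hCeq i) i
    simpa [Matrix.diagonal_apply_eq, Matrix.add_apply, Matrix.smul_apply, smul_eq_mul] using this
  have hD1 : ∀ i, (QuadAux.qext n d i)⁻¹ =
      μ₂ * ((QuadAux.qext n a i)⁻¹ + t₂ * (QuadAux.qext n b i)⁻¹) := by
    intro i
    rw [QuadAux.quadDiag_eq, QuadAux.quadDiag_eq, QuadAux.quadDiag_eq,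
      QuadAux.inv_diag _ (QuadAux.qext_ne_zero hd), QuadAux.inv_diag _ (QuadAux.qext_ne_zero ha),
      QuadAux.inv_diag _ (QuadAux.qext_ne_zero hb)] at hDeq
    have := congrFun (congrFun hDeq i) i
    simpa [Matrix.diagonal_apply_eq, Matrix.add_apply, Matrix.smul_apply, smul_eq_mul] using this
  have hlast : ∀ u : Fin n → ℂ, QuadAux.qext n u (Fin.last n) = -1 := by
    intro u
    unfold QuadAux.qext
    rw [dif_neg (by simp)]
  have hμt1 : μ₁ * (1 + t₁) = 1 := by
    have h := hC1 (Fin.last n)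
    rw [hlast a, hlast b, hlast c] at h
    have h2 : (-1 : ℂ)⁻¹ = -1 := by norm_num
    rw [h2] at h
    linear_combination h
  have hμt2 : μ₂ * (1 + t₂) = 1 := by
    have h := hD1 (Fin.last n)
    rw [hlast a, hlast b, hlast d] at h
    have h2 : (-1 : ℂ)⁻¹ = -1 := by norm_num
    rw [h2] at h
    linear_combination h
  have ht : t₁ ≠ t₂ := by
    intro h
    have h1 : (1 : ℂ) + t₁ ≠ 0 := by
      intro hz
      rw [hz, mul_zero] at hμt1
      exact one_ne_zero hμt1.symm
    have hμeq : μ₁ = μ₂ := by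
      rw [h] at hμt1
      have h3 : μ₁ * (μ₂ * (1 + t₂)) = μ₂ * (μ₁ * (1 + t₂)) := by ring
      rw [hμt1, hμt2] at h3
      simpa using h3
    have i0 : Fin (n+1) := ⟨0, by omega⟩
    have hcd0 : QuadAux.qext n c ⟨0, by omega⟩ = QuadAux.qext n d ⟨0, by omega⟩ := by
      apply inv_injective
      rw [hC1, hD1, hμeq, h]
    have : c ⟨0, by omega⟩ = d ⟨0, by omega⟩ := by
      unfold QuadAux.qext at hcd0
      rw [dif_pos (by omega : (0:ℕ) < n), dif_pos (by omega : (0:ℕ) < n)] at hcd0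
      exact hcd0
    exact hcd ⟨0, by omega⟩ this
  rw [QuadAux.quadPairN_eq_NN n a b, QuadAux.quadPairN_eq_NN n c d]
  exact QuadAux.key n (QuadAux.qext n a) (QuadAux.qext n b) (QuadAux.qext n c) (QuadAux.qext n d)
    (QuadAux.qext_ne_zero ha) (QuadAux.qext_ne_zero hb) (QuadAux.qext_ne_zero hc)
    (QuadAux.qext_ne_zero hd) t₁ t₂ μ₁ μ₂ hμ₁ hμ₂ ht hC1 hD1
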